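/- No analytic set is a base for a free ultrafilter: if X ⊆ 2^ℕ is analytic, then X is not a base for any free ultrafilter on ℕ. -/

import Mathlib

set_option linter.unusedSectionVars false

open Topology Set TopologicalSpace Filter

section Hull
variable {α : Type*} [TopologicalSpace α] [SecondCountableTopology α] [BaireSpace α]

lemma isMeagre_of_subset_compl_residual {s r : Set α} (hr : r ∈ residual α) (h : s ⊆ rᶜ) :
    IsMeagre s :=
  Filter.mem_of_superset hr (Set.subset_compl_comm.mp h)

lemma isMeagre_iUnion' {ι : Sort*} [Countable ι] {s : ι → Set α} (h : ∀ i, IsMeagre (s i)) :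
    IsMeagre (⋃ i, s i) := by
  rw [IsMeagre, Set.compl_iUnion]
  exact countable_iInter_mem.mpr h

lemma isMeagre_biUnion' {ι : Type*} {D : Set ι} (hD : D.Countable) {s : ι → Set α}
    (h : ∀ i ∈ D, IsMeagre (s i)) : IsMeagre (⋃ i ∈ D, s i) := by
  rw [IsMeagre, Set.compl_iUnion₂]
  exact (countable_bInter_mem hD).mpr h

lemma IsMeagre.union' {s t : Set α} (hs : IsMeagre s) (ht : IsMeagre t) : IsMeagre (s ∪ t) := by
  rw [IsMeagre, Set.compl_union]
  exact Filter.inter_mem hs ht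

lemma not_isMeagre_of_isOpen_nonempty {V : Set α} (hV : IsOpen V) (hne : V.Nonempty) :
    ¬ IsMeagre V := by
  intro h
  obtain ⟨x, hx⟩ := hne
  have hd : Dense Vᶜ := dense_of_mem_residual h
  obtain ⟨y, hy1, hy2⟩ := hd.exists_mem_open hV ⟨x, hx⟩
  exact hy1 hy2

lemma exists_open_nonempty_meagre_diff {s : Set α} (hs : BaireMeasurableSet s)
    (hnm : ¬ IsMeagre s) : ∃ V : Set α, IsOpen V ∧ V.Nonempty ∧ IsMeagre (V \ s) := by
  obtain ⟨u, hu, hsu⟩ := hs.residualEq_isOpen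
  rw [Filter.eventuallyEq_set] at hsu
  have h1 : IsMeagre (s \ u) := isMeagre_of_subset_compl_residual hsu
    (fun x ⟨hx1, hx2⟩ hx3 => hx2 (hx3.1 hx1))
  have h2 : IsMeagre (u \ s) := isMeagre_of_subset_compl_residual hsu
    (fun x ⟨hx1, hx2⟩ hx3 => hx2 (hx3.2 hx1))
  refine ⟨u, hu, ?_, h2⟩
  rcases eq_empty_or_nonempty u with rfl | hne
  · exact absurd (h1.mono (by simp)) hnm
  · exact hne

/-- The union of all basic open sets in which `A` is meager. -/
def bker (A : Set α) : Set α := ⋃₀ {V ∈ countableBasis α | IsMeagre (A ∩ V)}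

lemma isOpen_bker (A : Set α) : IsOpen (bker A) :=
  isOpen_sUnion fun _ hV => isOpen_of_mem_countableBasis hV.1

lemma isMeagre_inter_bker (A : Set α) : IsMeagre (A ∩ bker A) := by
  have hc : {V ∈ countableBasis α | IsMeagre (A ∩ V)}.Countable :=
    (countable_countableBasis α).mono (sep_subset _ _)
  have hm : IsMeagre (⋃ V ∈ {V ∈ countableBasis α | IsMeagre (A ∩ V)}, (A ∩ V)) :=
    isMeagre_biUnion' hc fun V hV => hV.2
  refine hm.mono ?_
  rintro x ⟨hxA, hxU⟩
  obtain ⟨V, hV, hxV⟩ := hxU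
  exact Set.mem_biUnion hV ⟨hxA, hxV⟩

/-- A Baire-measurable hull of `A`. -/
def bhull (A : Set α) : Set α := (bker A)ᶜ ∪ (A ∩ bker A)

lemma subset_bhull (A : Set α) : A ⊆ bhull A := fun x hx => by
  by_cases h : x ∈ bker A
  · exact Or.inr ⟨hx, h⟩
  · exact Or.inl h

lemma baireMeasurableSet_bhull (A : Set α) : BaireMeasurableSet (bhull A) :=
  ((isOpen_bker A).baireMeasurableSet.compl).union (isMeagre_inter_bker A).baireMeasurableSet

lemma bhull_min {A B : Set α} (hB : BaireMeasurableSet B) (hAB : A ⊆ B) :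
    IsMeagre (bhull A \ B) := by
  by_contra hnm
  have hC : BaireMeasurableSet (bhull A \ B) := (baireMeasurableSet_bhull A).diff hB
  obtain ⟨V, hVo, hVne, hVm⟩ := exists_open_nonempty_meagre_diff hC hnm
  obtain ⟨x, hx⟩ := hVne
  obtain ⟨W, hWb, hxW, hWV⟩ := (isBasis_countableBasis α).exists_subset_of_mem_open hx hVo
  have hAW : IsMeagre (A ∩ W) :=
    hVm.mono (by exact fun y ⟨hyA, hyW⟩ => ⟨hWV hyW, fun hy => hy.2 (hAB hyA)⟩)
  have hWk : W ⊆ bker A := fun y hy => ⟨W, ⟨hWb, hAW⟩, hy⟩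
  have hCW : IsMeagre ((bhull A \ B) ∩ W) := by
    refine (isMeagre_inter_bker A).mono ?_
    rintro y ⟨⟨hy1, _⟩, hyW⟩
    rcases hy1 with h | h
    · exact absurd (hWk hyW) h
    · exact h
  have hWm : IsMeagre W := by
    have h1 : IsMeagre (W \ (bhull A \ B)) :=
      hVm.mono (by exact fun y (hy : y ∈ W \ _) => ⟨hWV hy.1, hy.2⟩)
    refine (h1.union' hCW).mono ?_
    intro y hy
    by_cases h : y ∈ bhull A \ B
    · exact Or.inr ⟨h, hy⟩
    · exact Or.inl ⟨hy, h⟩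
  exact not_isMeagre_of_isOpen_nonempty (isOpen_of_mem_countableBasis hWb) ⟨x, hxW⟩ hWm

end Hull

section Souslin

variable (f : (ℕ → ℕ) → (ℕ → Bool))

/-- Basic cylinder in Baire space determined by a finite list. -/
def Ncyl (l : List ℕ) : Set (ℕ → ℕ) := {a | ∀ i : ℕ, (h : i < l.length) → a i = l[i]}

lemma Ncyl_nil : Ncyl [] = univ := by
  ext a; simp [Ncyl]

lemma Ncyl_anti {l m : List ℕ} (h : l <+: m) : Ncyl m ⊆ Ncyl l := by
  intro a ha i hi
  rw [ha i (lt_of_lt_of_le hi h.length_le)]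
  exact (List.IsPrefix.getElem h hi).symm

lemma Ncyl_succ {l : List ℕ} {a : ℕ → ℕ} (ha : a ∈ Ncyl l) :
    a ∈ Ncyl (l ++ [a l.length]) := by
  intro i hi
  rcases lt_or_eq_of_le (Nat.lt_succ_iff.mp (by simpa using hi)) with h | h
  · rw [List.getElem_append_left h]
    exact ha i h
  · subst h
    rw [List.getElem_concat_length rfl]

/-- `SA f l` : image of the cylinder. -/
def SA (l : List ℕ) : Set (ℕ → Bool) := f '' Ncyl l

def FA (l : List ℕ) : Set (ℕ → Bool) := closure (SA f l)

def GA (l : List ℕ) : Set (ℕ → Bool) := bhull (SA f l) ∩ FA f l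

def TA (l : List ℕ) : Set (ℕ → Bool) := ⋂ p ∈ {p : List ℕ | p <+: l}, GA f p

lemma mem_TA {l : List ℕ} {x : ℕ → Bool} : x ∈ TA f l ↔ ∀ p, p <+: l → x ∈ GA f p := by
  simp [TA]

lemma SA_anti {l m : List ℕ} (h : l <+: m) : SA f m ⊆ SA f l :=
  Set.image_mono (Ncyl_anti h)

lemma SA_subset_TA (l : List ℕ) : SA f l ⊆ TA f l := by
  intro x hx
  rw [mem_TA]
  intro p hp
  exact ⟨subset_bhull _ (SA_anti f hp hx), subset_closure (SA_anti f hp hx)⟩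

lemma TA_subset_GA {l p : List ℕ} (h : p <+: l) : TA f l ⊆ GA f p := fun x hx =>
  (mem_TA f).mp hx p h

lemma baireMeasurableSet_GA (l : List ℕ) : BaireMeasurableSet (GA f l) :=
  (baireMeasurableSet_bhull _).inter
    (BaireMeasurableSet.of_compl ((isClosed_closure.isOpen_compl).baireMeasurableSet))

lemma baireMeasurableSet_TA (l : List ℕ) : BaireMeasurableSet (TA f l) :=
  BaireMeasurableSet.biInter (Set.to_countable _) fun p _ => baireMeasurableSet_GA f p

lemma SA_eq_iUnion (l : List ℕ) : SA f l = ⋃ i, SA f (l ++ [i]) := by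
  apply Set.Subset.antisymm
  · rintro x ⟨a, ha, rfl⟩
    exact Set.mem_iUnion.mpr ⟨a l.length, ⟨a, Ncyl_succ ha, rfl⟩⟩
  · exact Set.iUnion_subset fun i => SA_anti f (List.prefix_append l [i])

lemma meagre_TA_diff (l : List ℕ) : IsMeagre (TA f l \ ⋃ i, TA f (l ++ [i])) := by
  have hB : BaireMeasurableSet (⋃ i, TA f (l ++ [i])) :=
    BaireMeasurableSet.iUnion fun i => baireMeasurableSet_TA f _
  have hSB : SA f l ⊆ ⋃ i, TA f (l ++ [i]) := by
    rw [SA_eq_iUnion]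
    exact Set.iUnion_mono fun i => SA_subset_TA f _
  have := bhull_min hB hSB
  refine this.mono (by exact fun x ⟨hx1, hx2⟩ => ⟨(TA_subset_GA f (List.prefix_refl l) hx1).1, hx2⟩)

theorem analyticSet_baireMeasurableSet {S : Set (ℕ → Bool)}
    (hS : MeasureTheory.AnalyticSet S) : BaireMeasurableSet S := by
  rw [MeasureTheory.AnalyticSet_def] at hS
  rcases hS with rfl | ⟨f, hf, rfl⟩
  · exact IsMeagre.empty.baireMeasurableSet
  -- `range f ⊆ TA f []`
  have hSA : SA f [] = range f := by rw [SA, Ncyl_nil, Set.image_univ]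
  have hsub : range f ⊆ TA f [] := hSA ▸ SA_subset_TA f []
  -- the other inclusion modulo a meager set
  have hkey : TA f [] \ range f ⊆ ⋃ l : List ℕ, (TA f l \ ⋃ i, TA f (l ++ [i])) := by
    rintro x ⟨hx, hxr⟩
    by_contra hxU
    simp only [Set.mem_iUnion, not_exists, Set.mem_diff, not_and, not_not] at hxU
    have H : ∀ l, x ∈ TA f l → ∃ i, x ∈ TA f (l ++ [i]) := by
      intro l hl
      simpa using hxU l hl
    classical
    set F : List ℕ → ℕ := fun l => if h : ∃ i, x ∈ TA f (l ++ [i]) then h.choose else 0 with hF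
    set L : ℕ → List ℕ := fun n => Nat.rec [] (fun _ ln => ln ++ [F ln]) n with hL
    have hL0 : L 0 = [] := rfl
    have hLs : ∀ n, L (n + 1) = L n ++ [F (L n)] := fun n => rfl
    have hxL : ∀ n, x ∈ TA f (L n) := by
      intro n
      induction n with
      | zero => simpa [hL0] using hx
      | succ n ih =>
        rw [hLs]
        have hex : ∃ i, x ∈ TA f (L n ++ [i]) := H (L n) ih
        rw [hF]
        simp only [dif_pos hex]
        exact hex.choose_spec
    have hlen : ∀ n, (L n).length = n := by
      intro n
      induction n with
      | zero => rfl
      | succ n ih => rw [hLs]; simp [ih]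
    have hpre : ∀ m n, m ≤ n → L m <+: L n := by
      intro m n h
      induction n, h using Nat.le_induction with
      | base => exact List.prefix_refl _
      | succ n hmn ih => rw [hLs]; exact ih.trans (List.prefix_append _ _)
    set a : ℕ → ℕ := fun n => F (L n) with ha
    have hgetL : ∀ n i (h : i < n), (L n)[i]'(by rw [hlen]; exact h) = a i := by
      intro n i h
      have e : L (i + 1) = L i ++ [a i] := hLs i
      have h1 : L (i + 1) <+: L n := hpre _ _ h
      have hi1 : i < (L (i + 1)).length := lt_of_lt_of_eq (Nat.lt_succ_self i) (hlen (i+1)).symm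
      have h2 : (L (i + 1))[i]'hi1 = a i := by
        rw [List.getElem_of_eq e hi1]
        exact List.getElem_concat_length (hlen i).symm _
      rw [← h2]
      exact (List.IsPrefix.getElem h1 hi1).symm
    have haN : ∀ n, a ∈ Ncyl (L n) := by
      intro n i hi
      exact (hgetL n i (by rwa [hlen] at hi)).symm
    have hxF : ∀ n, x ∈ FA f (L n) := fun n =>
      (TA_subset_GA f (List.prefix_refl _) (hxL n)).2
    -- show `x = f a`
    have hxfa : x = f a := by
      funext k
      have heq : {y : ℕ → Bool | y k = f a k} = (fun y : ℕ → Bool => y k) ⁻¹' {f a k} := rfl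
      have hWo : IsOpen {y : ℕ → Bool | y k = f a k} := by
        rw [heq]; exact (isOpen_discrete _).preimage (continuous_apply k)
      have hWc : IsClosed {y : ℕ → Bool | y k = f a k} := by
        rw [heq]; exact (isClosed_discrete _).preimage (continuous_apply k)
      have hpre' : IsOpen (f ⁻¹' {y : ℕ → Bool | y k = f a k}) := hWo.preimage hf
      obtain ⟨I, u, hIu, hsubI⟩ := (isOpen_pi_iff.mp hpre') a rfl
      set n := (I.sup id) + 1 with hn
      have hcyl : Ncyl (L n) ⊆ (I : Set ℕ).pi u := by
        intro b hb
        rw [Set.mem_pi]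
        intro i hi
        have hin : i < n := Nat.lt_succ_of_le (Finset.le_sup (f := id) hi)
        have hin' : i < (L n).length := lt_of_lt_of_eq hin (hlen n).symm
        have : b i = (L n)[i]'hin' := hb i hin'
        rw [this, hgetL n i hin]
        exact (hIu i hi).2
      have himg : SA f (L n) ⊆ {y : ℕ → Bool | y k = f a k} := by
        rintro y ⟨b, hb, rfl⟩
        exact hsubI (hcyl hb)
      have : FA f (L n) ⊆ {y : ℕ → Bool | y k = f a k} :=
        closure_minimal himg hWc
      exact this (hxF n)
    exact hxr ⟨a, hxfa.symm⟩
  have hmeag : IsMeagre (TA f [] \ range f) :=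
    (isMeagre_iUnion' fun l => meagre_TA_diff f l).mono hkey
  refine (baireMeasurableSet_TA f []).congr ?_
  rw [Filter.eventuallyEq_set]
  refine Filter.mem_of_superset hmeag ?_
  intro x hx
  simp only [Set.mem_compl_iff, Set.mem_diff, not_and, not_not] at hx
  exact ⟨fun h => hx h, fun h => hsub h⟩

end Souslin

/-- Identify `x : ℕ → Bool` with the subset `{n | x n = true}` of `ℕ`. -/
def toSet (x : ℕ → Bool) : Set ℕ := {n | x n = true}

/-- A free ultrafilter is one containing all cofinite sets. -/
def IsFree (U : Ultrafilter ℕ) : Prop := ∀ s : Set ℕ, s.Finite → sᶜ ∈ U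

/-- `X ⊆ 2^ℕ` is a base for the ultrafilter `U`. -/
def IsBase (X : Set (ℕ → Bool)) (U : Ultrafilter ℕ) : Prop :=
  (∀ x ∈ X, toSet x ∈ U) ∧ ∀ u ∈ U, ∃ x ∈ X, toSet x ⊆ u

section Main

/-- Flipping by a mask `m`. -/
def maskFlip (m : ℕ → Bool) (z : ℕ → Bool) : ℕ → Bool := fun i => xor (m i) (z i)

lemma maskFlip_invol (m : ℕ → Bool) (z : ℕ → Bool) : maskFlip m (maskFlip m z) = z := by
  funext i
  simp [maskFlip]

lemma continuous_maskFlip (m : ℕ → Bool) : Continuous (maskFlip m) := by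
  refine continuous_pi fun i => ?_
  exact (continuous_of_discreteTopology (f := fun b => xor (m i) b)).comp (continuous_apply i)

/-- `maskFlip m` as a homeomorphism. -/
def maskFlipHomeo (m : ℕ → Bool) : (ℕ → Bool) ≃ₜ (ℕ → Bool) where
  toFun := maskFlip m
  invFun := maskFlip m
  left_inv := maskFlip_invol m
  right_inv := maskFlip_invol m
  continuous_toFun := continuous_maskFlip m
  continuous_invFun := continuous_maskFlip m

lemma isMeagre_preimage_maskFlip {m : ℕ → Bool} {s : Set (ℕ → Bool)} (hs : IsMeagre s) :
    IsMeagre (maskFlip m ⁻¹' s) :=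
  hs.preimage_of_isOpenMap (continuous_maskFlip m) (maskFlipHomeo m).isOpenMap

/-- No analytic subset of `2^ℕ` is a base for a free ultrafilter on `ℕ`. -/
theorem no_analytic_ultrafilter_base (X : Set (ℕ → Bool))
    (hX : MeasureTheory.AnalyticSet X) (U : Ultrafilter ℕ) (hfree : IsFree U) :
    ¬ IsBase X U := by
  intro hbase
  classical
  set S : Set (ℕ → Bool) := {y | toSet y ∈ U} with hSdef
  -- characterize S via the base
  have hSchar : ∀ y, y ∈ S ↔ ∃ x ∈ X, ∀ n, x n = true → y n = true := by
    intro y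
    constructor
    · intro hy
      obtain ⟨x, hxX, hxy⟩ := hbase.2 (toSet y) hy
      exact ⟨x, hxX, fun n hn => hxy hn⟩
    · rintro ⟨x, hxX, hxy⟩
      exact Filter.mem_of_superset (hbase.1 x hxX) (fun n hn => hxy n hn)
  -- S is analytic
  have hSan : MeasureTheory.AnalyticSet S := by
    rw [MeasureTheory.AnalyticSet_def] at hX
    rcases hX with rfl | ⟨g, hg, hgr⟩
    · obtain ⟨x, hx, -⟩ := hbase.2 Set.univ Filter.univ_mem
      exact absurd hx (Set.notMem_empty x)
    · set C : Set ((ℕ → ℕ) × (ℕ → Bool)) :=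
        {p | ∀ n, g p.1 n = true → p.2 n = true} with hC
      have hCc : IsClosed C := by
        have : C = ⋂ n, ({p : (ℕ → ℕ) × (ℕ → Bool) | g p.1 n = true}ᶜ ∪
            {p : (ℕ → ℕ) × (ℕ → Bool) | p.2 n = true}) := by
          ext p
          simp only [Set.mem_iInter, Set.mem_union, Set.mem_compl_iff, Set.mem_setOf_eq, hC]
          constructor
          · intro h n; by_cases hn : g p.1 n = true
            · exact Or.inr (h n hn)
            · exact Or.inl hn
          · intro h n hn; rcases h n with h' | h'
            · exact absurd hn h'
            · exact h'
        rw [this]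
        refine isClosed_iInter fun n => IsClosed.union ?_ ?_
        · have h1 : IsOpen {p : (ℕ → ℕ) × (ℕ → Bool) | g p.1 n = true} := by
            have he : {p : (ℕ → ℕ) × (ℕ → Bool) | g p.1 n = true}
                = (fun p : (ℕ → ℕ) × (ℕ → Bool) => g p.1 n) ⁻¹' {b | b = true} := rfl
            rw [he]
            exact (isOpen_discrete _).preimage ((continuous_apply n).comp (hg.comp continuous_fst))
          exact h1.isClosed_compl
        · have h2 : IsClosed {p : (ℕ → ℕ) × (ℕ → Bool) | p.2 n = true} := by
            have he : {p : (ℕ → ℕ) × (ℕ → Bool) | p.2 n = true}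
                = (fun p : (ℕ → ℕ) × (ℕ → Bool) => p.2 n) ⁻¹' {b | b = true} := rfl
            rw [he]
            exact (isClosed_discrete _).preimage ((continuous_apply n).comp continuous_snd)
          exact h2
      have hSim : S = Prod.snd '' C := by
        ext y
        rw [hSchar y]
        constructor
        · rintro ⟨x, hxX, hxy⟩
          rw [← hgr] at hxX
          obtain ⟨a, rfl⟩ := hxX
          exact ⟨(a, y), fun n hn => hxy n hn, rfl⟩
        · rintro ⟨⟨a, y'⟩, hp, rfl⟩
          exact ⟨g a, hgr ▸ Set.mem_range_self a, fun n hn => hp n hn⟩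
      rw [hSim]
      have : IsCompletelyMetrizableSpace (ℕ → Bool) := inferInstance
      exact (hCc.analyticSet).image_of_continuous continuous_snd
  have hSbm : BaireMeasurableSet S := analyticSet_baireMeasurableSet hSan
  -- full flip sends S to its complement
  have hflip : maskFlip (fun _ => true) ⁻¹' S = Sᶜ := by
    ext z
    have htoSet : toSet (maskFlip (fun _ => true) z) = (toSet z)ᶜ := by
      ext n
      simp [toSet, maskFlip]
    simp only [Set.mem_preimage, hSdef, Set.mem_setOf_eq, Set.mem_compl_iff, htoSet]
    exact Ultrafilter.compl_mem_iff_notMem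
  -- invariance of S under finitely supported masks
  have hinv1 : ∀ (m : ℕ → Bool) (N : ℕ), (∀ i, m i = true → i < N) →
      ∀ z, z ∈ S → maskFlip m z ∈ S := by
    intro m N hm z hz
    have h1 : toSet z ∩ {i | i < N}ᶜ ∈ U :=
      Filter.inter_mem hz (hfree _ (Set.finite_Iio N))
    refine Filter.mem_of_superset h1 ?_
    rintro i ⟨hi1, hi2⟩
    have hmi : m i = false := by
      by_contra h
      exact hi2 (hm i (by simpa using h))
    simpa [toSet, maskFlip, hmi] using hi1
  have hinv : ∀ (m : ℕ → Bool) (N : ℕ), (∀ i, m i = true → i < N) →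
      maskFlip m ⁻¹' S = S := by
    intro m N hm
    ext z
    constructor
    · intro hz
      have := hinv1 m N hm (maskFlip m z) hz
      rwa [maskFlip_invol] at this
    · exact fun hz => hinv1 m N hm z hz
  -- the whole space is not meager
  have huniv : ¬ IsMeagre (Set.univ : Set (ℕ → Bool)) :=
    not_isMeagre_of_isOpen_nonempty isOpen_univ ⟨fun _ => true, trivial⟩
  -- S is not meager
  have hSnm : ¬ IsMeagre S := by
    intro h
    have h2 : IsMeagre Sᶜ := hflip ▸ isMeagre_preimage_maskFlip h
    exact huniv ((h.union' h2).mono (by simp))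
  obtain ⟨V, hVo, hVne, hVm⟩ := exists_open_nonempty_meagre_diff hSbm hSnm
  obtain ⟨z0, hz0⟩ := hVne
  obtain ⟨I, u, hIu, hsubI⟩ := (isOpen_pi_iff.mp hVo) z0 hz0
  set n := I.sup id + 1 with hn
  set C : Set (ℕ → Bool) := {z | ∀ i, i < n → z i = z0 i} with hCdef
  have hCV : C ⊆ V := by
    intro z hz
    refine hsubI (Set.mem_pi.mpr fun i hi => ?_)
    rw [hz i (Nat.lt_succ_of_le (Finset.le_sup (f := id) hi))]
    exact (hIu i hi).2
  have hCm : IsMeagre (C \ S) := hVm.mono (by exact fun z hz => ⟨hCV hz.1, hz.2⟩)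
  -- all patterns of length n
  have hcover : IsMeagre Sᶜ := by
    have hpiece : ∀ w : Fin n → Bool,
        IsMeagre ({z : ℕ → Bool | ∀ i, (h : i < n) → z i = w ⟨i, h⟩} \ S) := by
      intro w
      set m : ℕ → Bool := fun i => if h : i < n then xor (z0 i) (w ⟨i, h⟩) else false with hm
      have hmsupp : ∀ i, m i = true → i < n := by
        intro i hi
        by_contra h
        simp [hm, h] at hi
      have hsub : {z : ℕ → Bool | ∀ i, (h : i < n) → z i = w ⟨i, h⟩} \ S ⊆
          maskFlip m ⁻¹' (C \ S) := by
        rintro z ⟨hz1, hz2⟩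
        constructor
        · intro i hi
          have : z i = w ⟨i, hi⟩ := hz1 i hi
          simp only [maskFlip, hm, dif_pos hi, this]
          cases z0 i <;> cases w ⟨i, hi⟩ <;> rfl
        · rw [← hinv m n hmsupp] at hz2
          exact hz2
      exact (isMeagre_preimage_maskFlip hCm).mono hsub
    have hcov : Sᶜ ⊆ ⋃ w : Fin n → Bool,
        ({z : ℕ → Bool | ∀ i, (h : i < n) → z i = w ⟨i, h⟩} \ S) := by
      intro z hz
      exact Set.mem_iUnion.mpr ⟨fun i => z i, fun i _ => rfl, hz⟩
    exact (isMeagre_iUnion' hpiece).mono hcov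
  have hSm : IsMeagre S := by
    have : maskFlip (fun _ => true) ⁻¹' Sᶜ = S := by
      rw [Set.preimage_compl, hflip, compl_compl]
    exact this ▸ isMeagre_preimage_maskFlip hcover
  exact huniv ((hSm.union' hcover).mono (by simp))

end Main
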